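/- Let P = a t² + b t + c ∈ 𝕊[t] with a ≠ 0, coefficients a, b, c linearly independent over ℝ, and identically vanishing norm polynomial P P̄ = 0. Then b is invertible, and h = -b⁻¹ c is a right zero of P, i.e., a h² + b h + c = 0. Consequently P admits a factorization with right factor t - h. -/

import Mathlib

open Polynomial

notation "𝕊" => QuaternionAlgebra ℝ (-1) 0 1

set_option maxHeartbeats 1000000

noncomputable def projRI : 𝕊 →ₗ[ℝ] ℝ × ℝ where
  toFun x := (x.re, x.imI)
  map_add' x y := by simp
  map_smul' r x := by simp

/-- For `P = a t² + b t + c` with `a ≠ 0`, linearly independent coefficients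
and vanishing norm polynomial, `b` is invertible and `h = -b⁻¹ c` is a right
zero of `P`; consequently `t - h` is a right factor of `P`. -/
theorem factorization_independent_null (a b c : 𝕊) (ha : a ≠ 0)
    (hindep : LinearIndependent ℝ ![a, b, c])
    (hnorm : (C a * X ^ 2 + C b * X + C c) *
      (C (star a) * X ^ 2 + C (star b) * X + C (star c)) = 0) :
    IsUnit b ∧
    a * (-(Ring.inverse b * c)) ^ 2 + b * (-(Ring.inverse b * c)) + c = 0 ∧
    ∃ Q : Polynomial 𝕊,
      C a * X ^ 2 + C b * X + C c = Q * (X - C (-(Ring.inverse b * c))) := by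
  have h4 := congrArg (fun p => Polynomial.coeff p 4) hnorm
  have h3 := congrArg (fun p => Polynomial.coeff p 3) hnorm
  have h2 := congrArg (fun p => Polynomial.coeff p 2) hnorm
  have h1 := congrArg (fun p => Polynomial.coeff p 1) hnorm
  have h0 := congrArg (fun p => Polynomial.coeff p 0) hnorm
  simp only [coeff_mul, Finset.Nat.sum_antidiagonal_eq_sum_range_succ_mk,
    Finset.sum_range_succ, Finset.sum_range_zero, coeff_add, coeff_C_mul, coeff_X_pow, coeff_X,
    coeff_C, coeff_zero] at h4 h3 h2 h1 h0
  norm_num at h4 h3 h2 h1 h0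
  -- h4 : a * star a = 0, h3 : b * star a + a * star b = 0,
  -- h2 : c * star a + b * star b + a * star c = 0,
  -- h1 : c * star b + b * star c = 0, h0 : c * star c = 0
  set n : ℝ := (b * star b).re with hn_def
  have hbb : b * star b = ((n : ℝ) : 𝕊) := QuaternionAlgebra.mul_star_eq_coe b
  -- n ≠ 0
  have hn : n ≠ 0 := by
    intro hn0
    have hbb0 : b * star b = 0 := by rw [hbb, hn0]; simp
    have h2' : c * star a + a * star c = 0 := by
      have : c * star a + a * star c = (c * star a + b * star b + a * star c) - b * star b := by
        abel
      rw [this, h2, hbb0, zero_sub, neg_zero]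
    have hdisj : Disjoint (Submodule.span ℝ (Set.range ![a, b, c])) (LinearMap.ker projRI) := by
      rw [Submodule.disjoint_def]
      intro x hxs hxk
      obtain ⟨α, hx⟩ := (Submodule.mem_span_range_iff_exists_fun ℝ).mp hxs
      simp only [Fin.sum_univ_three, Matrix.cons_val_zero, Matrix.cons_val_one, Matrix.head_cons,
        Matrix.cons_val_two, Matrix.tail_cons] at hx
      have hxx : x * star x = 0 := by
        rw [← hx]
        have expand : (α 0 • a + α 1 • b + α 2 • c) * star (α 0 • a + α 1 • b + α 2 • c) =
            (α 0 * α 0) • (a * star a) + (α 0 * α 1) • (b * star a + a * star b) +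
            (α 0 * α 2) • (c * star a + a * star c) + (α 1 * α 1) • (b * star b) +
            (α 1 * α 2) • (c * star b + b * star c) + (α 2 * α 2) • (c * star c) := by
          simp only [star_add, QuaternionAlgebra.star_smul, mul_add, add_mul, smul_mul_assoc,
            mul_smul_comm, smul_add, smul_smul]
          module
        rw [expand, h4, h3, h2', hbb0, h1, h0]
        simp
      have hre : x.re = 0 ∧ x.imI = 0 := by
        have : projRI x = 0 := hxk
        simpa [projRI, Prod.ext_iff] using this
      have hre2 := congrArg QuaternionAlgebra.re hxx
      simp only [QuaternionAlgebra.re_mul, QuaternionAlgebra.re_star, QuaternionAlgebra.imI_star,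
        QuaternionAlgebra.imJ_star, QuaternionAlgebra.imK_star, QuaternionAlgebra.re_zero] at hre2
      refine QuaternionAlgebra.ext ?_ ?_ ?_ ?_ <;>
        simp only [QuaternionAlgebra.re_zero, QuaternionAlgebra.imI_zero,
          QuaternionAlgebra.imJ_zero, QuaternionAlgebra.imK_zero]
      · exact hre.1
      · exact hre.2
      · rw [hre.1, hre.2] at hre2
        nlinarith [hre2, mul_self_nonneg x.imJ, mul_self_nonneg x.imK]
      · rw [hre.1, hre.2] at hre2
        nlinarith [hre2, mul_self_nonneg x.imJ, mul_self_nonneg x.imK]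
    have hli2 : LinearIndependent ℝ (projRI ∘ ![a, b, c]) := hindep.map hdisj
    have hcard := hli2.fintype_card_le_finrank
    simp [Module.finrank_prod] at hcard
  -- b is a unit
  have hb'b : star b * b = ((n : ℝ) : 𝕊) := by rw [star_comm_self', hbb]
  have hright : b * (n⁻¹ • star b) = 1 := by
    rw [mul_smul_comm, hbb]
    rw [QuaternionAlgebra.smul_coe, inv_mul_cancel₀ hn, QuaternionAlgebra.coe_one]
  have hleft : (n⁻¹ • star b) * b = 1 := by
    rw [smul_mul_assoc, hb'b, QuaternionAlgebra.smul_coe, inv_mul_cancel₀ hn,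
      QuaternionAlgebra.coe_one]
  have hu : IsUnit b := ⟨⟨b, n⁻¹ • star b, hright, hleft⟩, rfl⟩
  have hinv : Ring.inverse b = n⁻¹ • star b := by
    have := Ring.inverse_unit ⟨b, n⁻¹ • star b, hright, hleft⟩
    simpa using this
  -- commutation of scalars
  have htc : ∀ x : 𝕊, ((n : ℝ) : 𝕊) * x = x * ((n : ℝ) : 𝕊) := fun x =>
    QuaternionAlgebra.coe_commutes n x
  -- star versions of relations
  have F1 : a * star b = -(b * star a) := eq_neg_of_add_eq_zero_right h3
  have F3 : b * star c = -(c * star b) := eq_neg_of_add_eq_zero_right h1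
  have h2'' : a * star c + c * star a = -(b * star b) := by
    have e : a * star c + c * star a = (c * star a + b * star b + a * star c) - b * star b := by
      abel
    rw [e, h2, zero_sub]
  have rere : ∀ x y : 𝕊, (x * y).re = (y * x).re := by
    intro x y
    simp only [QuaternionAlgebra.re_mul]
    ring
  have F2sum : star a * c + star c * a = -(b * star b) := by
    have e1 : star a * c + star c * a = ((2 * (star a * c).re : ℝ) : 𝕊) := by
      have := QuaternionAlgebra.self_add_star' (star a * c)
      rwa [star_mul, star_star, zero_mul, add_zero] at this
    have e2 : a * star c + c * star a = ((2 * (a * star c).re : ℝ) : 𝕊) := by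
      have := QuaternionAlgebra.self_add_star' (a * star c)
      rwa [star_mul, star_star, zero_mul, add_zero] at this
    have e3 : (star a * c).re = (a * star c).re := by
      rw [rere (star a) c]
      have := QuaternionAlgebra.re_star (c * star a)
      rw [star_mul, star_star, zero_mul, add_zero] at this
      exact this.symm
    rw [e1, e3, ← e2, h2'']
  have F2 : star a * c = -((n : ℝ) : 𝕊) - star c * a := by
    rw [← hbb]; exact eq_sub_of_add_eq F2sum
  -- the key identity
  have key : a * star b * (c * (star b * c)) = 0 := by
    have e1 : a * star b * (c * (star b * c)) = -(b * (star a * c) * (star b * c)) := by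
      rw [F1]; noncomm_ring
    have e2 : b * (star a * c) * (star b * c) =
        -(b * ((n : ℝ) : 𝕊) * (star b * c)) - b * star c * (a * star b) * c := by
      rw [F2]; noncomm_ring
    have e3 : b * ((n : ℝ) : 𝕊) * (star b * c) = ((n : ℝ) : 𝕊) * (((n : ℝ) : 𝕊) * c) := by
      rw [show b * ((n : ℝ) : 𝕊) = ((n : ℝ) : 𝕊) * b from (htc b).symm, mul_assoc,
        ← mul_assoc b (star b) c, hbb]
    have e4 : b * star c * (a * star b) * c = -(((n : ℝ) : 𝕊) * (((n : ℝ) : 𝕊) * c)) := by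
      rw [F3, F1]
      have e4a : -(c * star b) * -(b * star a) * c = c * (star b * b) * (star a * c) := by
        noncomm_ring
      rw [e4a, hb'b, F2]
      have e4b : c * ((n : ℝ) : 𝕊) * (-((n : ℝ) : 𝕊) - star c * a) =
          -(c * ((n : ℝ) : 𝕊) * ((n : ℝ) : 𝕊)) - c * ((n : ℝ) : 𝕊) * (star c * a) := by
        noncomm_ring
      rw [e4b]
      rw [show c * ((n : ℝ) : 𝕊) = ((n : ℝ) : 𝕊) * c from (htc c).symm]
      rw [show ((n : ℝ) : 𝕊) * c * ((n : ℝ) : 𝕊) = ((n : ℝ) : 𝕊) * (((n : ℝ) : 𝕊) * c) from by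
        rw [mul_assoc, ← htc c]]
      rw [mul_assoc ((n : ℝ) : 𝕊) c (star c * a), ← mul_assoc c (star c) a, h0, zero_mul,
        mul_zero, sub_zero]
    rw [e1, e2, e3, e4]
    abel
  -- the root property
  have hbh : b * (-(Ring.inverse b * c)) + c = 0 := by
    rw [mul_neg, ← mul_assoc, Ring.mul_inverse_cancel b hu, one_mul, neg_add_cancel]
  have hah : a * (-(Ring.inverse b * c)) ^ 2 = 0 := by
    rw [neg_sq, hinv, smul_mul_assoc, sq, smul_mul_assoc, mul_smul_comm, mul_smul_comm,
      mul_smul_comm]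
    rw [show star b * c * (star b * c) = star b * (c * (star b * c)) from by noncomm_ring]
    rw [show a * (star b * (c * (star b * c))) = a * star b * (c * (star b * c)) from by
      noncomm_ring]
    rw [key, smul_zero, smul_zero]
  have hroot : a * (-(Ring.inverse b * c)) ^ 2 + b * (-(Ring.inverse b * c)) + c = 0 := by
    rw [add_assoc, hbh, hah, add_zero]
  refine ⟨hu, hroot, ?_⟩
  -- factorization
  set h : 𝕊 := -(Ring.inverse b * c) with hh
  refine ⟨C a * X + C (a * h + b), ?_⟩
  have hch : (a * h + b) * h = -c := by
    have e : (a * h + b) * h = a * h ^ 2 + b * h := by noncomm_ring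
    rw [e]
    exact eq_neg_of_add_eq_zero_left hroot
  symm
  calc (C a * X + C (a * h + b)) * (X - C h)
      = C a * (X * X) + C (a * h + b) * X - (C a * (X * C h) + C (a * h + b) * C h) := by
        noncomm_ring
    _ = C a * X ^ 2 + C (a * h + b) * X - (C (a * h) * X + C ((a * h + b) * h)) := by
        rw [X_mul_C, ← C_mul,
          show C a * (C h * X) = C (a * h) * X from by rw [← mul_assoc, ← C_mul],
          ← sq]
    _ = C a * X ^ 2 + C b * X + C c := by
        rw [hch, map_neg, map_add, add_mul]
        abel
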